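/- Let T be a tree not accepted by the automaton A_{▷E} (which requires the successors of the root to be accepted in each state of the multiset E, with remaining successors unconstrained). Then there exists a submultiset F ⊑ E and a state g ∈ E \ F such that T is accepted by A_{▷F} and T is rejected by A_{▷(F ⊎ {g})}. -/

import Mathlib

/-- A `Σ`-labelled tree of arbitrary (finite) arity over direction set `D`:
a prefix-closed set of nodes (words over `D`) containing the root, with a labelling. -/
structure STree (D : Type) (A : Type) where
  nodes : Set (List D)
  root_mem : ([] : List D) ∈ nodes
  prefix_closed : ∀ n d, n ++ [d] ∈ nodes → n ∈ nodes
  label : List D → A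

/-- Positive Boolean combinations over atoms `α`. -/
inductive PBF (α : Type) : Type
  | tru : PBF α
  | fls : PBF α
  | atom : α → PBF α
  | and : PBF α → PBF α → PBF α
  | or : PBF α → PBF α → PBF α

def PBF.map {α β : Type} (f : α → β) : PBF α → PBF β
  | .tru => .tru
  | .fls => .fls
  | .atom a => .atom (f a)
  | .and φ ψ => .and (φ.map f) (ψ.map f)
  | .or φ ψ => .or (φ.map f) (ψ.map f)

/-- An EU-pair over state set `Q`: a multiset `E` of states and a set `U` of states. -/
abbrev EUPair (Q : Type) := Multiset Q × Set Q

def EUPair.map {Q Q' : Type} (f : Q → Q') (p : EUPair Q) : EUPair Q' :=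
  (p.1.map f, f '' p.2)

/-- The marking `ν` of the `children` satisfies the EU-pair `p` (relation `⊨⁺`):
some unitary submarking `f` of `ν` matches the existential part `p.1` on a family
`m` of pairwise distinct children and maps every other child into `p.2`. -/
def SatEU {D Q : Type} (children : Set D) (ν : D → Set Q) (p : EUPair Q) : Prop :=
  ∃ f : D → Q, (∀ d ∈ children, f d ∈ ν d) ∧
    ∃ m : Multiset D, m.Nodup ∧ (∀ d ∈ m, d ∈ children) ∧
      m.map f = p.1 ∧ ∀ d ∈ children, d ∉ m → f d ∈ p.2

/-- `⊨⁺` extended to positive Boolean combinations of EU-pairs. -/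
def SatPBF {D Q : Type} (children : Set D) (ν : D → Set Q) : PBF (EUPair Q) → Prop
  | .tru => True
  | .fls => False
  | .atom p => SatEU children ν p
  | .and φ ψ => SatPBF children ν φ ∧ SatPBF children ν ψ
  | .or φ ψ => SatPBF children ν φ ∨ SatPBF children ν ψ

/-- Alternating EU parity tree automaton over alphabet `A`. -/
structure APTA (A : Type) where
  Q : Type
  init : Q
  δ : Q → A → PBF (EUPair Q)
  ω : Q → ℕ

/-- Parity acceptance for an infinite sequence of priorities: the least priority
occurring infinitely often is even. -/
def ParitySeq (s : ℕ → ℕ) : Prop :=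
  Even (sInf {c | {k | s k = c}.Infinite})

namespace APTA

variable {A D : Type}

/-- The automaton state attached to a node of an execution tree. -/
def stateOf (M : APTA A) (e : List (D × M.Q)) : M.Q :=
  match e.getLast? with
  | none => M.init
  | some p => p.2

/-- `et` is an execution tree of `M` over the input tree `T`: a prefix-closed set of
words over `D × Q`, rooted at `[]` (in state `init`), projecting into `T`,
whose induced markings satisfy the transition function everywhere. -/
def IsExecTree (M : APTA A) (T : STree D A) (et : Set (List (D × M.Q))) : Prop :=
  ([] ∈ et) ∧ (∀ e p, e ++ [p] ∈ et → e ∈ et) ∧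
  (∀ e ∈ et, e.map Prod.fst ∈ T.nodes) ∧
  (∀ e ∈ et,
    SatPBF {d | (e.map Prod.fst) ++ [d] ∈ T.nodes}
      (fun d => {q | e ++ [(d, q)] ∈ et})
      (M.δ (M.stateOf e) (T.label (e.map Prod.fst))))

/-- `T` is accepted by `M`: some execution tree all of whose infinite branches
satisfy the parity condition. (Finite branches are accepting.) -/
def Accepts (M : APTA A) (T : STree D A) : Prop :=
  ∃ et : Set (List (D × M.Q)), M.IsExecTree T et ∧
    ∀ b : ℕ → D × M.Q, (∀ k, (List.range k).map b ∈ et) →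
      ParitySeq (fun k => M.ω (b k).2)

/-- The automaton `M` with initial state replaced by `q`. -/
def withInit (M : APTA A) (q : M.Q) : APTA A := { M with init := q }

end APTA

/-- The subtree of `T` rooted at node `n0`. -/
def STree.subAt {D A : Type} (T : STree D A) (n0 : List D) (h : n0 ∈ T.nodes) :
    STree D A where
  nodes := {m | n0 ++ m ∈ T.nodes}
  root_mem := by simpa using h
  prefix_closed := by
    intro n d hm
    have hm' : (n0 ++ n) ++ [d] ∈ T.nodes := by
      simpa [List.append_assoc] using hm
    exact T.prefix_closed (n0 ++ n) d hm'
  label := fun m => T.label (n0 ++ m)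

/-- The subtree of `T` rooted at the successor `d` of the root is accepted by `M`
started in state `q` (false when `d` is not a successor of the root). -/
def AccChild {A D : Type} (M : APTA A) (q : M.Q) (T : STree D A) (d : D) : Prop :=
  ∃ h : [d] ∈ T.nodes, (M.withInit q).Accepts (T.subAt [d] h)

/-- The automaton `A_{▷E}`: a fresh initial state whose transition (on every letter)
is the EU-pair `⟨E;{q⊤}⟩`, the rest of `M` unchanged. -/
def arrow {A : Type} (M : APTA A) (qT : M.Q) (E : Multiset M.Q) : APTA A where
  Q := Option M.Q
  init := none
  δ := fun q a =>
    match q with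
    | none => PBF.atom (E.map some, ({some qT} : Set (Option M.Q)))
    | some q => (M.δ q a).map (EUPair.map some)
  ω := fun q =>
    match q with
    | none => 0
    | some q => M.ω q

/-- The automaton `A_{▷⟨E;U⟩}`: fresh initial state with transition `⟨E;U⟩`. -/
def arrowEU {A : Type} (M : APTA A) (E : Multiset M.Q) (U : Set M.Q) : APTA A where
  Q := Option M.Q
  init := none
  δ := fun q a =>
    match q with
    | none => PBF.atom (E.map some, some '' U)
    | some q => (M.δ q a).map (EUPair.map some)
  ω := fun q =>
    match q with
    | none => 0
    | some q => M.ω q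

/-- A witness (minimal accepting execution tree, restricted to the root level) for
`A_{▷F}` on `T`: pairwise-distinct successors of the root matched with the states
of `F`, each accepting the corresponding subtree. -/
def Witness {A D : Type} (M : APTA A) (T : STree D A) (F : Multiset M.Q)
    (m : Multiset (D × M.Q)) : Prop :=
  (m.map Prod.fst).Nodup ∧ m.map Prod.snd = F ∧ ∀ p ∈ m, AccChild M p.2 T p.1


section Aux

open Classical

lemma infinite_shift_iff {s s' : ℕ → ℕ} (h : ∀ k, s' (k+1) = s k) (v : ℕ) :
    {k | s' k = v}.Infinite ↔ {k | s k = v}.Infinite := by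
  constructor
  · intro hi
    have h2 : ({k | s' k = v} \ {0}).Infinite := hi.diff (Set.finite_singleton 0)
    have hsub : ({k | s' k = v} \ {0}) ⊆ Nat.succ '' {k | s k = v} := by
      rintro mm ⟨hm, hm0⟩
      obtain ⟨k, rfl⟩ := Nat.exists_eq_succ_of_ne_zero (by simpa using hm0)
      exact ⟨k, by simpa [h k] using hm, rfl⟩
    exact Set.Infinite.of_image _ (h2.mono hsub)
  · intro hi
    have hsub : Nat.succ '' {k | s k = v} ⊆ {k | s' k = v} := by
      rintro mm ⟨k, hk, rfl⟩; simpa [h k] using hk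
    exact ((hi.image (Set.injOn_of_injective Nat.succ_injective)).mono hsub)

lemma paritySeq_shift {s s' : ℕ → ℕ} (h : ∀ k, s' (k+1) = s k) :
    ParitySeq s' ↔ ParitySeq s := by
  unfold ParitySeq
  have he : {c | {k | s' k = c}.Infinite} = {c | {k | s k = c}.Infinite} := by
    ext c; exact infinite_shift_iff h c
  rw [he]

lemma satPBF_map_mp {D Q : Type} (q0 : Q) {ch : Set D} {ν' : D → Set (Option Q)}
    (φ : PBF (EUPair Q)) (h : SatPBF ch ν' (φ.map (EUPair.map some))) :
    SatPBF ch (fun d => {q | some q ∈ ν' d}) φ := by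
  induction φ with
  | tru => trivial
  | fls => exact h
  | atom p =>
    obtain ⟨f', hf', m, hnd, hmch, hmap, hrest⟩ := h
    have hsome : ∀ d ∈ ch, ∃ q, f' d = some q := by
      intro d hd
      by_cases hdm : d ∈ m
      · have h1 : f' d ∈ Multiset.map f' m := Multiset.mem_map_of_mem _ hdm
        rw [hmap] at h1
        obtain ⟨q, _, hq⟩ := Multiset.mem_map.1 h1
        exact ⟨q, hq.symm⟩
      · obtain ⟨q, _, hq⟩ := hrest d hd hdm
        exact ⟨q, hq.symm⟩
    refine ⟨fun d => (f' d).getD q0, ?_, m, hnd, hmch, ?_, ?_⟩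
    · intro d hd
      obtain ⟨q, hq⟩ := hsome d hd
      simpa [Set.mem_setOf_eq, hq] using hf' d hd
    · have h2 : Multiset.map (fun d => (f' d).getD q0) m
          = Multiset.map (fun o => o.getD q0) (Multiset.map f' m) := by
        rw [Multiset.map_map]; rfl
      rw [h2, hmap]
      show Multiset.map (fun o => o.getD q0) (Multiset.map some p.1) = p.1
      rw [Multiset.map_map]
      simp
    · intro d hd hdm
      obtain ⟨q, hqU, hq⟩ := hrest d hd hdm
      show (f' d).getD q0 ∈ p.2
      rw [← hq]
      simpa using hqU
  | and φ ψ ihφ ihψ => exact ⟨ihφ h.1, ihψ h.2⟩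
  | or φ ψ ihφ ihψ => exact h.elim (fun h1 => Or.inl (ihφ h1)) (fun h1 => Or.inr (ihψ h1))

lemma satPBF_map_mpr {D Q : Type} {ch : Set D} {ν' : D → Set (Option Q)}
    (φ : PBF (EUPair Q)) (h : SatPBF ch (fun d => {q | some q ∈ ν' d}) φ) :
    SatPBF ch ν' (φ.map (EUPair.map some)) := by
  induction φ with
  | tru => trivial
  | fls => exact h
  | atom p =>
    obtain ⟨f, hf, m, hnd, hmch, hmap, hrest⟩ := h
    refine ⟨fun d => some (f d), fun d hd => hf d hd, m, hnd, hmch, ?_,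
      fun d hd hdm => ⟨f d, hrest d hd hdm, rfl⟩⟩
    show Multiset.map (fun d => some (f d)) m = Multiset.map some p.1
    rw [← hmap, Multiset.map_map]
    rfl
  | and φ ψ ihφ ihψ => exact ⟨ihφ h.1, ihψ h.2⟩
  | or φ ψ ihφ ihψ => exact h.elim (fun h1 => Or.inl (ihφ h1)) (fun h1 => Or.inr (ihψ h1))


def liftP {D Q : Type} (p : D × Q) : D × Option Q := (p.1, some p.2)

def liftE {D Q : Type} (e : List (D × Q)) : List (D × Option Q) := e.map liftP

lemma liftE_injective {D Q : Type} : Function.Injective (liftE (D := D) (Q := Q)) := by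
  apply List.map_injective_iff.2
  rintro ⟨d1, q1⟩ ⟨d2, q2⟩ h
  simp [liftP] at h
  simp [h.1, h.2]

lemma arrow_exec_iff {A D : Type} (M : APTA A) (qT : M.Q) (F : Multiset M.Q) (T : STree D A)
    (et : Set (List (D × Option M.Q))) :
    (arrow M qT F).IsExecTree T et ↔
      (([] : List (D × Option M.Q)) ∈ et ∧
        (∀ (e : List (D × Option M.Q)) (p : D × Option M.Q), e ++ [p] ∈ et → e ∈ et) ∧
        (∀ e : List (D × Option M.Q), e ∈ et → e.map Prod.fst ∈ T.nodes) ∧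
        (∀ e : List (D × Option M.Q), e ∈ et →
          SatPBF (Q := Option M.Q) {d | (e.map Prod.fst) ++ [d] ∈ T.nodes}
            (fun d => {q : Option M.Q | e ++ [(d, q)] ∈ et})
            ((arrow M qT F).δ ((arrow M qT F).stateOf e) (T.label (e.map Prod.fst))))) :=
  Iff.rfl

lemma arrow_accepts_iff {A D : Type} (M : APTA A) (qT : M.Q) (F : Multiset M.Q) (T : STree D A) :
    (arrow M qT F).Accepts T ↔ ∃ et : Set (List (D × Option M.Q)),
      (([] : List (D × Option M.Q)) ∈ et ∧
        (∀ (e : List (D × Option M.Q)) (p : D × Option M.Q), e ++ [p] ∈ et → e ∈ et) ∧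
        (∀ e : List (D × Option M.Q), e ∈ et → e.map Prod.fst ∈ T.nodes) ∧
        (∀ e : List (D × Option M.Q), e ∈ et →
          SatPBF (Q := Option M.Q) {d | (e.map Prod.fst) ++ [d] ∈ T.nodes}
            (fun d => {q : Option M.Q | e ++ [(d, q)] ∈ et})
            ((arrow M qT F).δ ((arrow M qT F).stateOf e) (T.label (e.map Prod.fst))))) ∧
      ∀ b : ℕ → D × Option M.Q, (∀ k, (List.range k).map b ∈ et) →
        ParitySeq (fun k => (arrow M qT F).ω (b k).2) :=
  Iff.rfl

lemma stateOf_cons_lift {A D : Type} (M : APTA A) (qT : M.Q) (F : Multiset M.Q)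
    (d : D) (q : M.Q) (e : List (D × M.Q)) :
    (arrow M qT F).stateOf ((((d, some q) : D × Option M.Q) :: liftE e : List (D × Option M.Q)))
      = some ((M.withInit q).stateOf e) := by
  induction e using List.reverseRecOn with
  | nil => rfl
  | append_singleton e0 p _ =>
    unfold APTA.stateOf
    rw [show ((d, some q) :: liftE (e0 ++ [p])) = ((d, some q) :: liftE e0) ++ [liftP p] by
      simp [liftE]]
    erw [List.getLast?_concat, List.getLast?_concat]
    rfl

lemma fst_liftP {D Q : Type} : (Prod.fst ∘ (liftP (D := D) (Q := Q))) = Prod.fst := rfl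

lemma child_accepts {A D : Type} (M : APTA A) (qT : M.Q) (F : Multiset M.Q) (T : STree D A)
    (et : Set (List (D × Option M.Q))) (hex : (arrow M qT F).IsExecTree T et)
    (hpar : ∀ b : ℕ → D × Option M.Q, (∀ k, (List.range k).map b ∈ et) →
      ParitySeq (fun k => (arrow M qT F).ω (b k).2))
    (d : D) (q : M.Q) (hd : [d] ∈ T.nodes) (hmem : [((d : D), some q)] ∈ et) :
    (M.withInit q).Accepts (T.subAt [d] hd) := by
  obtain ⟨hroot, hpc, hproj, hsat⟩ := (arrow_exec_iff M qT F T et).1 hex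
  refine ⟨{e : List (D × M.Q) | (d, some q) :: liftE e ∈ et}, ⟨hmem, ?_, ?_, ?_⟩, ?_⟩
  · show ∀ (e : List (D × M.Q)) (p : D × M.Q),
      e ++ [p] ∈ {e : List (D × M.Q) | (d, some q) :: liftE e ∈ et} →
      e ∈ {e : List (D × M.Q) | (d, some q) :: liftE e ∈ et}
    intro e p hep
    have h1 : ((d, some q) :: liftE e) ++ [liftP p] ∈ et := by
      have h0 : (d, some q) :: liftE (e ++ [p]) = ((d, some q) :: liftE e) ++ [liftP p] := by
        simp [liftE]
      rw [← h0]; exact hep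
    exact hpc _ _ h1
  · show ∀ e ∈ {e : List (D × M.Q) | (d, some q) :: liftE e ∈ et},
      List.map Prod.fst e ∈ (T.subAt [d] hd).nodes
    intro e he
    have h1 := hproj _ he
    show [d] ++ List.map Prod.fst e ∈ T.nodes
    simpa [liftE, fst_liftP] using h1
  · show ∀ e ∈ {e : List (D × M.Q) | (d, some q) :: liftE e ∈ et},
      SatPBF {d' | List.map Prod.fst e ++ [d'] ∈ (T.subAt [d] hd).nodes}
        (fun d' => {q'' : M.Q | e ++ [(d', q'')] ∈
            {e' : List (D × M.Q) | (d, some q) :: liftE e' ∈ et}})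
        (M.δ ((M.withInit q).stateOf e) ((T.subAt [d] hd).label (List.map Prod.fst e)))
    intro e he
    have h1 := hsat _ he
    rw [stateOf_cons_lift] at h1
    have h2 := satPBF_map_mp qT (M.δ ((M.withInit q).stateOf e)
        (T.label (List.map Prod.fst ((d, some q) :: liftE e)))) h1
    have hch : {d' | (List.map Prod.fst (((d, some q) : D × Option M.Q) :: liftE e)) ++ [d'] ∈ T.nodes}
        = {d' | (List.map Prod.fst e) ++ [d'] ∈ (T.subAt [d] hd).nodes} := by
      ext d'; simp [liftE, fst_liftP, STree.subAt]
    have hlab : T.label (List.map Prod.fst (((d, some q) : D × Option M.Q) :: liftE e))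
        = (T.subAt [d] hd).label (List.map Prod.fst e) := by
      simp [liftE, fst_liftP, STree.subAt]
    have hν : (fun d' => {q'' : M.Q |
          some q'' ∈ {o | (((d, some q) : D × Option M.Q) :: liftE e) ++ [(d', o)] ∈ et}})
        = fun d' => {q'' : M.Q | e ++ [(d', q'')] ∈
            {e' : List (D × M.Q) | (d, some q) :: liftE e' ∈ et}} := by
      funext d'; ext q''
      show ((d, some q) :: liftE e) ++ [(d', some q'')] ∈ et
        ↔ (d, some q) :: liftE (e ++ [(d', q'')]) ∈ et
      have h0 : (d, some q) :: liftE (e ++ [(d', q'')])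
          = ((d, some q) :: liftE e) ++ [(d', some q'')] := by simp [liftE, liftP]
      rw [h0]
    simp only [liftE, liftP, STree.subAt, Set.mem_setOf_eq, List.map_cons, List.map_map,
      List.map_append, fst_liftP, List.cons_append, List.nil_append, List.singleton_append]
      at h2 ⊢
    exact h2
  · show ∀ b : ℕ → D × M.Q,
      (∀ k, (List.range k).map b ∈ {e : List (D × M.Q) | (d, some q) :: liftE e ∈ et}) →
      ParitySeq (fun k => M.ω (b k).2)
    intro b hb
    set b' : ℕ → D × Option M.Q :=
      fun k => match k with | 0 => (d, some q) | k + 1 => liftP (b k) with hb'def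
    have hb' : ∀ k, (List.range k).map b' ∈ et := by
      intro k
      cases k with
      | zero => simpa using hroot
      | succ k =>
        have h1 := hb k
        have h2 : (List.range (k+1)).map b' = (d, some q) :: liftE ((List.range k).map b) := by
          rw [List.range_succ_eq_map]
          simp only [List.map_cons, List.map_map, liftE]
          rfl
        rw [h2]; exact h1
    have hp := hpar b' hb'
    exact (paritySeq_shift (fun k => rfl)).1 hp

lemma accepts_arrow_witness {A D : Type} (M : APTA A) (qT : M.Q) (T : STree D A)
    (F : Multiset M.Q) (h : (arrow M qT F).Accepts T) : ∃ w, Witness M T F w := by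
  obtain ⟨et, hex, hpar⟩ := (arrow_accepts_iff M qT F T).1 h
  obtain ⟨hroot, hpc, hproj, hsat⟩ := hex
  have hs : SatEU {d | [d] ∈ T.nodes} (fun d => {o | [(d, o)] ∈ et})
      (F.map some, ({some qT} : Set (Option M.Q))) := hsat [] hroot
  obtain ⟨f', hf', m, hnd, hmch, hmap, hrest⟩ := hs
  have hsome : ∀ d ∈ m, ∃ q, f' d = some q := by
    intro d hdm
    have h1 : f' d ∈ Multiset.map f' m := Multiset.mem_map_of_mem _ hdm
    rw [hmap] at h1
    obtain ⟨q, _, hq⟩ := Multiset.mem_map.1 h1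
    exact ⟨q, hq.symm⟩
  refine ⟨m.map (fun d => (d, (f' d).getD qT)), ?_, ?_, ?_⟩
  · rw [Multiset.map_map]
    simpa using hnd
  · rw [Multiset.map_map]
    have h2 : Multiset.map (Prod.snd ∘ fun d => (d, (f' d).getD qT)) m
        = Multiset.map (fun o => o.getD qT) (Multiset.map f' m) := by
      rw [Multiset.map_map]; rfl
    rw [h2, hmap]
    show Multiset.map (fun o => o.getD qT) (Multiset.map some F) = F
    rw [Multiset.map_map]
    simp
  · intro p hp
    obtain ⟨d0, hd0m, heq⟩ := Multiset.mem_map.1 hp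
    obtain ⟨q0, hq0⟩ := hsome d0 hd0m
    subst heq
    have hd : [d0] ∈ T.nodes := hmch d0 hd0m
    refine ⟨hd, ?_⟩
    have h3 : [((d0 : D), f' d0)] ∈ et := hf' d0 (hmch d0 hd0m)
    have h4 : [((d0 : D), some ((f' d0).getD qT))] ∈ et := by
      rw [hq0] at h3 ⊢
      exact h3
    exact child_accepts M qT F T et ⟨hroot, hpc, hproj, hsat⟩ hpar d0 _ hd h4

lemma satPBF_congr {D Q : Type} {ch ch' : Set D} {ν ν' : D → Set Q} {φ φ' : PBF (EUPair Q)}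
    (hch : ch' = ch) (hν : ∀ d, ν' d = ν d) (hφ : φ' = φ) (h : SatPBF ch ν φ) :
    SatPBF ch' ν' φ' := by
  subst hch hφ
  have h2 : ν' = ν := funext hν
  subst h2
  exact h

lemma witness_accepts {A D : Type} (M : APTA A) (qT : M.Q)
    (hqT : ∀ (D' : Type) (T' : STree D' A), (M.withInit qT).Accepts T')
    (T : STree D A) (F : Multiset M.Q) (w : Multiset (D × M.Q))
    (hw : Witness M T F w) : (arrow M qT F).Accepts T := by
  classical
  obtain ⟨hnd, hsnd, hacc⟩ := hw
  set s : D → M.Q := fun d => if h : ∃ q, (d, q) ∈ w then h.choose else qT with hs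
  have hs_mem : ∀ p ∈ w, s p.1 = p.2 := by
    rintro ⟨d, q⟩ hp
    have hex : ∃ q', (d, q') ∈ w := ⟨q, hp⟩
    have h1 : ((d : D), hex.choose) ∈ w := hex.choose_spec
    have h2 : ((d, hex.choose) : D × M.Q) = (d, q) :=
      Multiset.inj_on_of_nodup_map hnd _ h1 _ hp rfl
    have h3 : hex.choose = q := congrArg Prod.snd h2
    simp [hs, dif_pos hex, h3]
  have hchild : ∀ d (hd : [d] ∈ T.nodes), (M.withInit (s d)).Accepts (T.subAt [d] hd) := by
    intro d hd
    by_cases hex : ∃ q, (d, q) ∈ w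
    · have h1 : ((d : D), hex.choose) ∈ w := hex.choose_spec
      obtain ⟨hd', hacc'⟩ := hacc _ h1
      have h2 : s d = hex.choose := by simp [hs, dif_pos hex]
      rw [h2]
      exact hacc'
    · have h2 : s d = qT := by simp [hs, dif_neg hex]
      rw [h2]
      exact hqT D _
  have hchoice : ∀ d (hd : [d] ∈ T.nodes), ∃ et : Set (List (D × M.Q)),
      (M.withInit (s d)).IsExecTree (T.subAt [d] hd) et ∧
      ∀ b : ℕ → D × M.Q, (∀ k, (List.range k).map b ∈ et) →
        ParitySeq (fun k => M.ω (b k).2) := fun d hd => hchild d hd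
  choose etf hetf hparf using hchoice
  rw [arrow_accepts_iff]
  refine ⟨({[]} ∪ {l | ∃ d, ∃ hd : [d] ∈ T.nodes, ∃ e ∈ etf d hd,
      l = (d, some (s d)) :: liftE e} : Set (List (D × Option M.Q))), ⟨?_, ?_, ?_, ?_⟩, ?_⟩
  · exact Or.inl rfl
  · -- prefix closed
    intro e p hep
    rcases hep with hep | ⟨d, hd, e0, he0, heq⟩
    · exact absurd hep (by simp)
    · match e, heq with
      | [], _ => exact Or.inl rfl
      | x :: e1, heq =>
        have hh : x = (d, some (s d)) := by
          have := congrArg (fun l => l.head?) heq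
          simpa using this
        have ht : e1 ++ [p] = liftE e0 := by
          have := congrArg (fun l => l.tail) heq
          simpa using this
        rcases List.eq_nil_or_concat e0 with rfl | ⟨e0', p0, rfl⟩
        · exact absurd ht (by simp [liftE])
        · rw [List.concat_eq_append] at he0 ht
          have h2 : liftE (e0' ++ [p0]) = liftE e0' ++ [liftP p0] := by simp [liftE]
          rw [h2] at ht
          obtain ⟨rfl, -⟩ := List.append_inj' ht rfl
          have he0' : e0' ∈ etf d hd := (hetf d hd).2.1 e0' p0 he0
          exact Or.inr ⟨d, hd, e0', he0', by rw [hh]⟩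
  · -- projection
    intro e he
    rcases he with he | ⟨d, hd, e0, he0, heq⟩
    · rw [he]; exact T.root_mem
    · have h1 := (hetf d hd).2.2.1 e0 he0
      rw [heq]
      show List.map Prod.fst ((d, some (s d)) :: liftE e0) ∈ T.nodes
      have h2 : List.map Prod.fst ((d, some (s d)) :: liftE e0)
          = d :: List.map Prod.fst e0 := by
        simp [liftE, List.map_map, fst_liftP]
      rw [h2]
      exact h1
  · -- transitions
    intro e he
    rcases he with he | ⟨d, hd, e0, he0, heq⟩
    · rw [he]
      show SatEU {d | [d] ∈ T.nodes}
        (fun d => {o | [((d : D), o)] ∈ ({[]} ∪ {l | ∃ d, ∃ hd : [d] ∈ T.nodes, ∃ e ∈ etf d hd,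
            l = (d, some (s d)) :: liftE e} : Set (List (D × Option M.Q)))})
        (F.map some, ({some qT} : Set (Option M.Q)))
      refine ⟨fun d => some (s d), ?_, w.map Prod.fst, by simpa using hnd, ?_, ?_, ?_⟩
      · intro d hd
        exact Or.inr ⟨d, hd, [], (hetf d hd).1, rfl⟩
      · intro d hdm
        obtain ⟨p, hpw, rfl⟩ := Multiset.mem_map.1 hdm
        exact (hacc p hpw).1
      · rw [Multiset.map_map]
        have h1 : Multiset.map ((fun d => some (s d)) ∘ Prod.fst) w
            = Multiset.map (fun p : D × M.Q => some p.2) w :=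
          Multiset.map_congr rfl (fun p hp => by
            show some (s p.1) = some p.2
            rw [hs_mem p hp])
        rw [h1, ← hsnd, Multiset.map_map]
        rfl
      · intro d hd hdm
        have hex : ¬ ∃ q, (d, q) ∈ w := by
          rintro ⟨q, hq⟩
          exact hdm (by simpa using Multiset.mem_map_of_mem Prod.fst hq)
        have h2 : s d = qT := by simp [hs, dif_neg hex]
        show some (s d) ∈ ({some qT} : Set (Option M.Q))
        rw [h2]
        exact rfl
    · rw [heq]
      rw [stateOf_cons_lift]
      apply satPBF_map_mpr
      refine satPBF_congr ?_ ?_ ?_ ((hetf d hd).2.2.2 e0 he0)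
      · ext d'
        show List.map Prod.fst ((d, some (s d)) :: liftE e0) ++ [d'] ∈ T.nodes
          ↔ List.map Prod.fst e0 ++ [d'] ∈ (T.subAt [d] hd).nodes
        have h2 : List.map Prod.fst ((d, some (s d)) :: liftE e0)
            = d :: List.map Prod.fst e0 := by
          simp [liftE, List.map_map, fst_liftP]
        rw [h2]
        exact Iff.rfl
      · intro d'
        ext q
        show (d, some (s d)) :: (liftE e0 ++ [((d' : D), some q)])
            ∈ ({[]} ∪ {l | ∃ d, ∃ hd : [d] ∈ T.nodes, ∃ e ∈ etf d hd,
              l = (d, some (s d)) :: liftE e} : Set (List (D × Option M.Q)))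
          ↔ e0 ++ [(d', q)] ∈ etf d hd
        constructor
        · rintro (habs | ⟨d2, hd2, e3, he3, heq3⟩)
          · exact absurd habs (by simp)
          · have heq3' := heq3
            have hh : ((d : D), some (s d)) = (d2, some (s d2)) := by
              have := congrArg (fun l => l.head?) heq3'
              simpa using this
            obtain rfl : d2 = d := (congrArg Prod.fst hh).symm
            have ht : liftE e0 ++ [((d' : D), some q)] = liftE e3 := by
              have := congrArg (fun l => l.tail) heq3'
              simpa using this
            have h4 : liftE (e0 ++ [(d', q)]) = liftE e3 := by
              rw [← ht]; simp [liftE, liftP]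
            have h5 := liftE_injective h4
            rw [h5]
            exact he3
        · intro hq
          exact Or.inr ⟨d, hd, e0 ++ [(d', q)], hq, by simp [liftE, liftP]⟩
      · show M.δ _ (T.label (List.map Prod.fst ((d, some (s d)) :: liftE e0))) = _
        have h2 : List.map Prod.fst ((d, some (s d)) :: liftE e0)
            = d :: List.map Prod.fst e0 := by
          simp [liftE, List.map_map, fst_liftP]
        rw [h2]
        rfl
  · -- parity
    intro b hb
    rcases hb 1 with h0 | ⟨d, hd, e2, he2, heq⟩
    · exact absurd h0 (by simp)
    · have hb0 : b 0 = (d, some (s d)) := by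
        have h1 : List.map b (List.range 1) = [b 0] := rfl
        rw [h1] at heq
        have h2 := congrArg (fun l => l.head?) heq
        simpa using h2
      set b'' : ℕ → D × M.Q := fun k => ((b (k+1)).1, (b (k+1)).2.getD qT) with hb''
      have hsplit : ∀ k, (List.range (k+1)).map b
          = b 0 :: (List.range k).map (fun i => b (i+1)) := by
        intro k
        rw [List.range_succ_eq_map]
        simp only [List.map_cons, List.map_map]
        rfl
      have hpre : ∀ k, (List.range k).map b'' ∈ etf d hd := by
        intro k
        rcases hb (k+1) with h2 | ⟨d2, hd2, e3, he3, heq3⟩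
        · exact absurd h2 (by simp [hsplit k])
        · rw [hsplit k] at heq3
          have hh : b 0 = (d2, some (s d2)) := by
            have := congrArg (fun l => l.head?) heq3
            simpa using this
          obtain rfl : d2 = d := by
            rw [hb0] at hh
            exact (congrArg Prod.fst hh).symm
          have ht : (List.range k).map (fun i => b (i+1)) = liftE e3 := by
            have := congrArg (fun l => l.tail) heq3
            simpa using this
          have hmemform : ∀ i ∈ List.range k, liftP (b'' i) = b (i+1) := by
            intro i hi
            have hx : b (i+1) ∈ liftE e3 := by
              rw [← ht]
              exact List.mem_map_of_mem hi
            obtain ⟨y, _, hyx⟩ := List.mem_map.1 hx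
            rw [← hyx]
            show liftP ((b (i+1)).1, (b (i+1)).2.getD qT) = liftP y
            rw [← hyx]
            simp [liftP]
          have he3' : liftE ((List.range k).map b'') = liftE e3 := by
            rw [← ht, liftE, List.map_map]
            exact List.map_congr_left hmemform
          rw [liftE_injective he3']
          exact he3
      have hpar2 := hparf d hd b'' hpre
      have hsome' : ∀ k, ∃ u, (b (k+1)).2 = some u := by
        intro k
        have hmem : b (k+1) ∈ (List.range (k+2)).map b :=
          List.mem_map_of_mem (List.mem_range.2 (by omega))
        rcases hb (k+2) with h2 | ⟨d2, hd2, e3, he3, heq3⟩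
        · rw [show (List.range (k+2)).map b = [] by simpa using h2] at hmem
          simp at hmem
        · rw [heq3] at hmem
          rcases List.mem_cons.1 hmem with h3 | h3
          · exact ⟨s d2, by rw [h3]⟩
          · obtain ⟨y, _, hy⟩ := List.mem_map.1 h3
            exact ⟨y.2, by rw [← hy]; rfl⟩
      refine (paritySeq_shift ?_).2 hpar2
      intro k
      obtain ⟨u, hu⟩ := hsome' k
      show (arrow M qT F).ω (b (k+1)).2 = M.ω ((b (k+1)).2.getD qT)
      rw [hu]
      rfl

end Aux


/-- if a tree `T` is not accepted by `A_{▷E}` (where `q⊤` is a state of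
`M` accepting every tree), then there is a blocking pair: a submultiset `F ⊑ E` and a
state `g ∈ E ∖ F` with `T` accepted by `A_{▷F}` and rejected by `A_{▷(F ⊎ {g})}`. -/
theorem stmt6 (A D : Type) (M : APTA A) [DecidableEq M.Q] (qT : M.Q)
    (hqT : ∀ (D' : Type) (T' : STree D' A), (M.withInit qT).Accepts T')
    (T : STree D A) (E : Multiset M.Q)
    (h : ¬ (arrow M qT E).Accepts T) :
    ∃ F, F ≤ E ∧ ∃ g, g ∈ E - F ∧
      (arrow M qT F).Accepts T ∧ ¬ (arrow M qT (F + {g})).Accepts T := by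
  classical
  have hbase : (arrow M qT 0).Accepts T :=
    witness_accepts M qT hqT T 0 0 ⟨by simp, by simp, by simp⟩
  set P : ℕ → Prop := fun n => ∃ F, F ≤ E ∧ Multiset.card F = n ∧ (arrow M qT F).Accepts T
    with hP
  have hP0 : P 0 := ⟨0, zero_le, rfl, hbase⟩
  have hPn0 : P (Nat.findGreatest P (Multiset.card E)) :=
    Nat.findGreatest_spec (Nat.zero_le _) hP0
  obtain ⟨F, hFE, hcard, hFacc⟩ := hPn0
  refine ⟨F, hFE, ?_⟩
  have hFne : F ≠ E := by
    rintro rfl; exact h hFacc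
  have hsub : E - F ≠ 0 := by
    intro h0
    exact hFne (le_antisymm hFE (tsub_eq_zero_iff_le.1 h0))
  obtain ⟨g, hg⟩ := Multiset.exists_mem_of_ne_zero hsub
  refine ⟨g, hg, hFacc, ?_⟩
  intro hacc2
  have hle : F + {g} ≤ E := by
    have h1 : ({g} : Multiset M.Q) ≤ E - F := Multiset.singleton_le.2 hg
    calc F + {g} ≤ F + (E - F) := add_le_add le_rfl h1
    _ = E := add_tsub_cancel_of_le hFE
  have hcard2 : Multiset.card (F + {g}) = Nat.findGreatest P (Multiset.card E) + 1 := by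
    simp [hcard]
  have hP1 : P (Nat.findGreatest P (Multiset.card E) + 1) := ⟨F + {g}, hle, hcard2, hacc2⟩
  have hle2 : Nat.findGreatest P (Multiset.card E) + 1 ≤ Multiset.card E := by
    have h2 := Multiset.card_le_card hle
    rw [hcard2] at h2
    exact h2
  exact Nat.findGreatest_is_greatest (Nat.lt_succ_self _) hle2 hP1
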